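/- For block lower triangular L, M ∈ ℝ^{Nd×Nd}, dist_AW²(L, M) = min over block diagonal orthogonal Q = diag(Q₁,…,Q_N), Q_t ∈ O(d), of ‖L − MQ‖_F², and in particular dist_AW(L, M) ≤ ‖L − M‖_F. -/

import Mathlib

open Matrix BigOperators Classical

/-- Squared Frobenius norm. -/
def frobSq {m n : Type*} [Fintype m] [Fintype n] (C : Matrix m n ℝ) : ℝ :=
  ∑ i, ∑ j, (C i j) ^ 2

/-- Frobenius norm. -/
noncomputable def frobNorm {m n : Type*} [Fintype m] [Fintype n]
    (C : Matrix m n ℝ) : ℝ :=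
  Real.sqrt (frobSq C)

/-- Square root of a positive semidefinite matrix (junk value `0` otherwise). -/
noncomputable def psdSqrt {n : Type*} [Fintype n] [DecidableEq n]
    (A : Matrix n n ℝ) : Matrix n n ℝ :=
  if h : A.PosSemidef then
    (h.1.eigenvectorUnitary : Matrix n n ℝ) * diagonal (Real.sqrt ∘ h.1.eigenvalues) *
      (star h.1.eigenvectorUnitary : Matrix n n ℝ) else 0

/-- Nuclear norm: `‖C‖₊ = tr((CᵀC)^{1/2})`, the sum of the singular values. -/
noncomputable def nuclearNorm {m n : Type*} [Fintype m] [Fintype n] [DecidableEq n]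
    (C : Matrix m n ℝ) : ℝ :=
  (psdSqrt (Cᵀ * C)).trace

/-- Squared Bures–Wasserstein distance:
`dist_BW²(A,B) = tr A + tr B − 2 tr((A^{1/2} B A^{1/2})^{1/2})`. -/
noncomputable def distBWsq {n : Type*} [Fintype n] [DecidableEq n]
    (A B : Matrix n n ℝ) : ℝ :=
  A.trace + B.trace - 2 * (psdSqrt (psdSqrt A * B * psdSqrt A)).trace

variable {N d : ℕ}

/-- `L` is block lower triangular: all `d×d` blocks `L_{s,t}` with `s < t` vanish. -/
def BlockLowerTri (L : Matrix (Fin N × Fin d) (Fin N × Fin d) ℝ) : Prop :=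
  ∀ s t : Fin N, s < t → ∀ i j : Fin d, L (s, i) (t, j) = 0

/-- The `t`-th `d×d` diagonal block of a matrix. -/
def diagBlock (A : Matrix (Fin N × Fin d) (Fin N × Fin d) ℝ) (t : Fin N) :
    Matrix (Fin d) (Fin d) ℝ :=
  fun i j => A (t, i) (t, j)

/-- The `t`-th column block `L_{·,t} ∈ ℝ^{Nd×d}` of `L`. -/
def colBlock (L : Matrix (Fin N × Fin d) (Fin N × Fin d) ℝ) (t : Fin N) :
    Matrix (Fin N × Fin d) (Fin d) ℝ :=
  fun p j => L p (t, j)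

/-- Block diagonal matrix built from `d×d` blocks `Q₁, …, Q_N`. -/
def blockDiag (Q : Fin N → Matrix (Fin d) (Fin d) ℝ) :
    Matrix (Fin N × Fin d) (Fin N × Fin d) ℝ :=
  fun p q => if p.1 = q.1 then Q q.1 p.2 q.2 else 0

/-- Squared adapted Wasserstein pseudo-distance between Cholesky factors:
`dist_AW²(L,M) = ‖L‖_F² + ‖M‖_F² − 2 ∑_t ‖(LᵀM)_{t,t}‖₊`. -/
noncomputable def distAWsq (L M : Matrix (Fin N × Fin d) (Fin N × Fin d) ℝ) : ℝ :=
  frobSq L + frobSq M - 2 * ∑ t : Fin N, nuclearNorm (diagBlock (Lᵀ * M) t)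

/-- Adapted Wasserstein pseudo-distance. -/
noncomputable def distAW (L M : Matrix (Fin N × Fin d) (Fin N × Fin d) ℝ) : ℝ :=
  Real.sqrt (distAWsq L M)

/-! ### Auxiliary results -/

lemma real_conjT {n m : Type*} [Fintype n] [Fintype m] (A : Matrix n m ℝ) : Aᴴ = Aᵀ := by
  ext i j; simp [conjTranspose_apply]

lemma exists_svd (C : Matrix (Fin d) (Fin d) ℝ) :
    ∃ (U V : Matrix (Fin d) (Fin d) ℝ) (D : Fin d → ℝ),
      Uᵀ * U = 1 ∧ Vᵀ * V = 1 ∧ (∀ i, 0 ≤ D i) ∧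
      C = U * Matrix.diagonal D * Vᵀ ∧ nuclearNorm C = ∑ i, D i := by
  have hS : (Cᵀ * C).PosSemidef := by
    simpa [real_conjT] using Matrix.posSemidef_conjTranspose_mul_self C
  set S := Cᵀ * C with hSdef
  have hH : S.IsHermitian := hS.1
  set V : Matrix (Fin d) (Fin d) ℝ := (hH.eigenvectorUnitary : Matrix (Fin d) (Fin d) ℝ) with hV
  set μ : Fin d → ℝ := hH.eigenvalues with hμ
  have hμ0 : ∀ i, 0 ≤ μ i := fun i => hS.eigenvalues_nonneg i
  set D : Fin d → ℝ := fun i => Real.sqrt (μ i) with hD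
  have hD0 : ∀ i, 0 ≤ D i := fun i => Real.sqrt_nonneg _
  have hDsq : ∀ i, D i * D i = μ i := fun i => Real.mul_self_sqrt (hμ0 i)
  have hVo : Vᵀ * V = 1 := by
    have := (Matrix.mem_unitaryGroup_iff').mp hH.eigenvectorUnitary.2
    simpa [real_conjT, star_eq_conjTranspose] using this
  have hVo' : V * Vᵀ = 1 := mul_eq_one_comm.mp hVo
  have hspec : S = V * Matrix.diagonal μ * Vᵀ := by
    have := hH.spectral_theorem
    simpa [star_eq_conjTranspose, real_conjT] using this
  -- key inner products of the images of eigenvectors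
  have key : ∀ i j, ∑ k, (C *ᵥ (fun l => V l i)) k * (C *ᵥ (fun l => V l j)) k
      = Matrix.diagonal μ i j := by
    intro i j
    have h1 : ((C * V)ᵀ * (C * V)) i j = Matrix.diagonal μ i j := by
      rw [transpose_mul, Matrix.mul_assoc, ← Matrix.mul_assoc Cᵀ C V, ← hSdef, hspec,
        Matrix.mul_assoc, Matrix.mul_assoc, hVo, Matrix.mul_one, ← Matrix.mul_assoc, hVo,
        Matrix.one_mul]
    rw [← h1]
    simp [Matrix.mul_apply, mulVec, dotProduct, transpose_apply, mul_comm]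
  -- the normalized images, as elements of EuclideanSpace
  set w : Fin d → EuclideanSpace ℝ (Fin d) :=
    fun i => (D i)⁻¹ • ((WithLp.equiv 2 (Fin d → ℝ)).symm (C *ᵥ (fun l => V l i))) with hw
  have hbase : ∀ i j, (inner ℝ ((WithLp.equiv 2 (Fin d → ℝ)).symm (C *ᵥ fun l => V l i))
      ((WithLp.equiv 2 (Fin d → ℝ)).symm (C *ᵥ fun l => V l j)) : ℝ)
      = Matrix.diagonal μ i j := by
    intro i j
    rw [← key i j]
    simp only [PiLp.inner_apply, RCLike.inner_apply', RCLike.conj_to_real]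
    rfl
  have hip : ∀ i j, (inner ℝ (w i) (w j) : ℝ)
      = (D i)⁻¹ * ((D j)⁻¹ * Matrix.diagonal μ i j) := by
    intro i j
    rw [hw]
    simp only [real_inner_smul_left, real_inner_smul_right, hbase]
    ring
  have hon : Orthonormal ℝ (({i | μ i ≠ 0} : Set (Fin d)).restrict w) := by
    rw [orthonormal_iff_ite]
    rintro ⟨i, hi⟩ ⟨j, hj⟩
    show inner ℝ (w i) (w j) = _
    rw [hip i j]
    by_cases h : i = j
    · subst h
      simp only [Matrix.diagonal_apply_eq, Subtype.mk.injEq, if_pos rfl]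
      have : D i ≠ 0 := by
        simp only [hD]
        exact Real.sqrt_ne_zero'.mpr (lt_of_le_of_ne (hμ0 i) (Ne.symm hi))
      field_simp [hDsq i]
      rw [if_pos trivial, mul_one, pow_two, hDsq i]
    · have : (⟨i, hi⟩ : {i | μ i ≠ 0}) ≠ ⟨j, hj⟩ := by simpa using h
      rw [if_neg this, Matrix.diagonal_apply_ne _ h]
      ring
  obtain ⟨b, hb⟩ := hon.exists_orthonormalBasis_extension_of_card_eq
    (by simp [finrank_euclideanSpace])
  set U : Matrix (Fin d) (Fin d) ℝ := fun k i => b i k with hU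
  have hUo : Uᵀ * U = 1 := by
    ext i j
    have := orthonormal_iff_ite.mp b.orthonormal i j
    simp only [PiLp.inner_apply, RCLike.inner_apply', RCLike.conj_to_real] at this
    simp only [Matrix.mul_apply, transpose_apply, hU, Matrix.one_apply]
    rw [← this]; rfl
  -- C * V = U * diagonal D
  have hCV : C * V = U * Matrix.diagonal D := by
    ext k i
    have hrhs : (U * Matrix.diagonal D) k i = D i * b i k := by
      rw [Matrix.mul_diagonal]; exact mul_comm _ _
    rw [hrhs]
    by_cases h : μ i = 0
    · have hzero : (C *ᵥ (fun l => V l i)) k = 0 := by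
        have h2 := key i i
        rw [Matrix.diagonal_apply_eq, h] at h2
        have h3 : ∀ k, (C *ᵥ (fun l => V l i)) k = 0 := by
          intro k'
          have := (Finset.sum_eq_zero_iff_of_nonneg
            (fun k' _ => mul_self_nonneg ((C *ᵥ (fun l => V l i)) k'))).mp h2 k'
            (Finset.mem_univ _)
          exact mul_self_eq_zero.mp this
        exact h3 k
      have : (C * V) k i = 0 := by
        rw [← hzero]; simp [Matrix.mul_apply, mulVec, dotProduct]
      rw [this]
      simp [hD, h]
    · have hDne : D i ≠ 0 := by
        simp only [hD]
        exact Real.sqrt_ne_zero'.mpr (lt_of_le_of_ne (hμ0 i) (Ne.symm h))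
      rw [hb i h]
      have : (w i) k = (D i)⁻¹ * (C *ᵥ (fun l => V l i)) k := rfl
      rw [this]
      have h4 : (C * V) k i = (C *ᵥ (fun l => V l i)) k := by
        simp [Matrix.mul_apply, mulVec, dotProduct]
      rw [h4]
      field_simp
  have hfac : C = U * Matrix.diagonal D * Vᵀ := by
    calc C = C * (V * Vᵀ) := by rw [hVo', Matrix.mul_one]
    _ = (C * V) * Vᵀ := by rw [Matrix.mul_assoc]
    _ = U * Matrix.diagonal D * Vᵀ := by rw [hCV]
  -- nuclear norm
  have hRpsd : (V * Matrix.diagonal D * Vᵀ).PosSemidef := by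
    have hdiag : (Matrix.diagonal D).PosSemidef :=
      Matrix.posSemidef_diagonal_iff.mpr hD0
    have := hdiag.mul_mul_conjTranspose_same V
    simpa [real_conjT] using this
  have hRsq : (V * Matrix.diagonal D * Vᵀ) ^ 2 = S := by
    rw [pow_two, hspec]
    have : Matrix.diagonal D * Matrix.diagonal D = Matrix.diagonal μ := by
      rw [Matrix.diagonal_mul_diagonal]
      exact congrArg _ (funext hDsq)
    calc V * Matrix.diagonal D * Vᵀ * (V * Matrix.diagonal D * Vᵀ)
        = V * Matrix.diagonal D * (Vᵀ * V) * Matrix.diagonal D * Vᵀ := by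
          simp only [Matrix.mul_assoc]
      _ = V * (Matrix.diagonal D * Matrix.diagonal D) * Vᵀ := by
          rw [hVo]; simp only [Matrix.mul_one, Matrix.mul_assoc]
      _ = V * Matrix.diagonal μ * Vᵀ := by rw [this]
  have hsqrt : psdSqrt S = V * Matrix.diagonal D * Vᵀ := by
    rw [psdSqrt, dif_pos hS]
    show (hH.eigenvectorUnitary : Matrix (Fin d) (Fin d) ℝ) * diagonal (Real.sqrt ∘ hH.eigenvalues) * (star hH.eigenvectorUnitary : Matrix (Fin d) (Fin d) ℝ) = _
    rw [star_eq_conjTranspose, real_conjT]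
    rfl
  refine ⟨U, V, D, hUo, hVo, hD0, hfac, ?_⟩
  have : nuclearNorm C = (psdSqrt S).trace := rfl
  rw [this, hsqrt, Matrix.trace_mul_cycle, hVo, Matrix.one_mul, Matrix.trace_diagonal]

lemma trace_mul_le_nuclearNorm (C : Matrix (Fin d) (Fin d) ℝ)
    (Q : Matrix (Fin d) (Fin d) ℝ) (hQ : Qᵀ * Q = 1) :
    (C * Q).trace ≤ nuclearNorm C := by
  obtain ⟨U, V, D, hUo, hVo, hD0, hfac, hnn⟩ := exists_svd C
  have hVo' : V * Vᵀ = 1 := mul_eq_one_comm.mp hVo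
  have hWo : (Vᵀ * Q * U)ᵀ * (Vᵀ * Q * U) = 1 := by
    simp only [transpose_mul, transpose_transpose, Matrix.mul_assoc]
    rw [← Matrix.mul_assoc V Vᵀ, hVo', Matrix.one_mul, ← Matrix.mul_assoc Qᵀ Q, hQ,
      Matrix.one_mul, hUo]
  have htr : (C * Q).trace = (Matrix.diagonal D * (Vᵀ * Q * U)).trace := by
    rw [hfac, Matrix.mul_assoc (U * Matrix.diagonal D) Vᵀ Q, Matrix.trace_mul_comm,
      ← Matrix.mul_assoc, Matrix.trace_mul_comm]
  rw [htr, hnn]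
  set W : Matrix (Fin d) (Fin d) ℝ := Vᵀ * Q * U with hW
  have hdiagtr : (Matrix.diagonal D * W).trace = ∑ i, D i * W i i := by
    simp [Matrix.trace, Matrix.diag, Matrix.mul_apply, Matrix.diagonal_apply]
  rw [hdiagtr]
  apply Finset.sum_le_sum
  intro i _
  have hWi : W i i ≤ 1 := by
    have h1 : (W i i) ^ 2 ≤ ∑ k, (W k i) ^ 2 :=
      Finset.single_le_sum (fun k _ => sq_nonneg (W k i)) (Finset.mem_univ i)
    have h2 : ∑ k, (W k i) ^ 2 = (Wᵀ * W) i i := by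
      simp [Matrix.mul_apply, transpose_apply, pow_two]
    rw [h2, hWo, Matrix.one_apply_eq] at h1
    nlinarith [h1]
  nlinarith [hD0 i, hWi]

lemma exists_trace_eq_nuclearNorm (C : Matrix (Fin d) (Fin d) ℝ) :
    ∃ Q : Matrix (Fin d) (Fin d) ℝ, Qᵀ * Q = 1 ∧ (C * Q).trace = nuclearNorm C := by
  obtain ⟨U, V, D, hUo, hVo, hD0, hfac, hnn⟩ := exists_svd C
  have hUo' : U * Uᵀ = 1 := mul_eq_one_comm.mp hUo
  refine ⟨V * Uᵀ, ?_, ?_⟩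
  · simp only [transpose_mul, transpose_transpose, Matrix.mul_assoc]
    rw [← Matrix.mul_assoc Vᵀ V, hVo, Matrix.one_mul, hUo']
  · rw [hnn]
    conv_lhs => rw [hfac]
    simp only [Matrix.mul_assoc]
    rw [← Matrix.mul_assoc Vᵀ V, hVo, Matrix.one_mul, Matrix.trace_mul_comm,
      Matrix.mul_assoc, hUo, Matrix.mul_one, Matrix.trace_diagonal]


lemma frobSq_eq_trace {m n : Type*} [Fintype m] [Fintype n] [DecidableEq n]
    (C : Matrix m n ℝ) : frobSq C = (Cᵀ * C).trace := by
  rw [frobSq, Matrix.trace]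
  rw [Finset.sum_comm]
  apply Finset.sum_congr rfl
  intro j _
  simp [Matrix.diag, Matrix.mul_apply, transpose_apply, pow_two]

lemma blockDiag_transpose (Q : Fin N → Matrix (Fin d) (Fin d) ℝ) :
    (blockDiag Q)ᵀ = blockDiag (fun t => (Q t)ᵀ) := by
  ext ⟨s, i⟩ ⟨t, j⟩
  simp only [transpose_apply, _root_.blockDiag]
  by_cases h : s = t
  · subst h; simp
  · rw [if_neg h, if_neg (Ne.symm h)]

lemma blockDiag_mul (Q R : Fin N → Matrix (Fin d) (Fin d) ℝ) :
    blockDiag Q * blockDiag R = blockDiag (fun t => Q t * R t) := by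
  ext ⟨s, i⟩ ⟨t, j⟩
  simp only [Matrix.mul_apply, _root_.blockDiag]
  rw [Fintype.sum_prod_type]
  by_cases h : s = t
  · subst h
    rw [if_pos rfl]
    rw [Finset.sum_eq_single s]
    · simp [Matrix.mul_apply]
    · intro u _ hu
      simp [if_neg (Ne.symm hu), hu]
    · simp
  · rw [if_neg h]
    apply Finset.sum_eq_zero
    intro u _
    apply Finset.sum_eq_zero
    intro k _
    by_cases hsu : s = u
    · subst hsu
      rw [if_neg h, mul_zero]
    · rw [if_neg hsu, zero_mul]

lemma blockDiag_one : blockDiag (fun _ : Fin N => (1 : Matrix (Fin d) (Fin d) ℝ)) = 1 := by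
  ext ⟨s, i⟩ ⟨t, j⟩
  simp only [_root_.blockDiag, Matrix.one_apply, Prod.mk.injEq]
  by_cases h : s = t
  · subst h
    simp [Prod.ext_iff]
  · simp [h]

lemma blockDiag_orth {Q : Fin N → Matrix (Fin d) (Fin d) ℝ}
    (hQ : ∀ t, (Q t)ᵀ * Q t = 1) :
    (blockDiag Q)ᵀ * blockDiag Q = 1 := by
  rw [_root_.blockDiag_transpose, _root_.blockDiag_mul]
  have : (fun t => (Q t)ᵀ * Q t) = fun _ => (1 : Matrix (Fin d) (Fin d) ℝ) :=
    funext hQ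
  rw [this, _root_.blockDiag_one]

lemma trace_mul_blockDiag (A : Matrix (Fin N × Fin d) (Fin N × Fin d) ℝ)
    (Q : Fin N → Matrix (Fin d) (Fin d) ℝ) :
    (A * blockDiag Q).trace = ∑ t, (diagBlock A t * Q t).trace := by
  rw [Matrix.trace]
  rw [Fintype.sum_prod_type]
  apply Finset.sum_congr rfl
  intro t _
  rw [Matrix.trace]
  apply Finset.sum_congr rfl
  intro i _
  simp only [Matrix.diag, Matrix.mul_apply, _root_.blockDiag, diagBlock]
  rw [Fintype.sum_prod_type]
  rw [Finset.sum_eq_single t]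
  · simp
  · intro u _ hu
    apply Finset.sum_eq_zero
    intro k _
    rw [if_neg hu, mul_zero]
  · simp

lemma frobSq_expansion (L M : Matrix (Fin N × Fin d) (Fin N × Fin d) ℝ)
    {Q : Fin N → Matrix (Fin d) (Fin d) ℝ} (hQ : ∀ t, (Q t)ᵀ * Q t = 1) :
    frobSq (L - M * blockDiag Q)
      = frobSq L + frobSq M - 2 * ∑ t, (diagBlock (Lᵀ * M) t * Q t).trace := by
  set G := blockDiag Q with hG
  have hGo : Gᵀ * G = 1 := blockDiag_orth hQ
  have hGo' : G * Gᵀ = 1 := mul_eq_one_comm.mp hGo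
  rw [frobSq_eq_trace, frobSq_eq_trace L, frobSq_eq_trace M]
  have hexp : (L - M * G)ᵀ * (L - M * G)
      = Lᵀ * L + Gᵀ * (Mᵀ * M) * G - (Lᵀ * (M * G) + (Lᵀ * (M * G))ᵀ) := by
    simp only [transpose_sub, transpose_mul, sub_mul, mul_sub, transpose_transpose]
    noncomm_ring
  rw [hexp]
  rw [Matrix.trace_sub, Matrix.trace_add, Matrix.trace_add, Matrix.trace_transpose]
  have h1 : (Gᵀ * (Mᵀ * M) * G).trace = (Mᵀ * M).trace := by
    rw [Matrix.trace_mul_cycle, ← Matrix.mul_assoc, hGo', Matrix.one_mul]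
  have h2 : (Lᵀ * (M * G)).trace = ∑ t, (diagBlock (Lᵀ * M) t * Q t).trace := by
    rw [← Matrix.mul_assoc, hG, trace_mul_blockDiag]
  rw [h1, h2]
  ring

/-- Procrustes representation of `dist_AW`: `dist_AW²(L,M)` is the minimum of
`‖L − MQ‖_F²` over block diagonal orthogonal `Q`; in particular
`dist_AW(L,M) ≤ ‖L − M‖_F`. -/
theorem distAW_procrustes (N d : ℕ)
    (L M : Matrix (Fin N × Fin d) (Fin N × Fin d) ℝ)
    (hL : BlockLowerTri L) (hM : BlockLowerTri M) :
    IsLeast {r : ℝ | ∃ Q : Fin N → Matrix (Fin d) (Fin d) ℝ,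
        (∀ t, (Q t)ᵀ * Q t = 1) ∧ r = frobSq (L - M * blockDiag Q)}
      (distAWsq L M) ∧
    distAW L M ≤ frobNorm (L - M) := by
  have hleast : IsLeast {r : ℝ | ∃ Q : Fin N → Matrix (Fin d) (Fin d) ℝ,
      (∀ t, (Q t)ᵀ * Q t = 1) ∧ r = frobSq (L - M * blockDiag Q)}
      (distAWsq L M) := by
    constructor
    · choose Q hQo hQtr using fun t => exists_trace_eq_nuclearNorm (diagBlock (Lᵀ * M) t)
      refine ⟨Q, hQo, ?_⟩
      rw [frobSq_expansion L M hQo, distAWsq]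
      congr 1
      congr 1
      exact Finset.sum_congr rfl fun t _ => (hQtr t).symm
    · rintro r ⟨Q, hQo, rfl⟩
      rw [frobSq_expansion L M hQo, distAWsq]
      have : ∑ t, (diagBlock (Lᵀ * M) t * Q t).trace
          ≤ ∑ t, nuclearNorm (diagBlock (Lᵀ * M) t) :=
        Finset.sum_le_sum fun t _ => trace_mul_le_nuclearNorm _ _ (hQo t)
      linarith
  refine ⟨hleast, ?_⟩
  have hmem : frobSq (L - M) ∈ {r : ℝ | ∃ Q : Fin N → Matrix (Fin d) (Fin d) ℝ,
      (∀ t, (Q t)ᵀ * Q t = 1) ∧ r = frobSq (L - M * blockDiag Q)} := by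
    refine ⟨fun _ => 1, fun t => by simp, ?_⟩
    rw [_root_.blockDiag_one, Matrix.mul_one]
  have h1 : distAWsq L M ≤ frobSq (L - M) := hleast.2 hmem
  exact Real.sqrt_le_sqrt h1
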